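/- (Positivity of ⟨χ, L₋χ⟩ for odd χ, from the proof of Lemma 2.1.) Let W : ℝ → ℝ be continuous, and let φ ∈ C²(ℝ,ℝ) be even with φ(x) > 0 for all x ∈ ℝ and −φ''(x) + W(x)φ(x) = 0 for all x ∈ ℝ. Let χ ∈ C²(ℝ,ℝ) be odd, compactly supported, and not identically zero. Then ∫_ℝ χ(x)(−χ''(x) + W(x)χ(x)) dx > 0. -/

import Mathlib

open Set Filter MeasureTheory

/-- (Positivity of `⟨χ, L₋ χ⟩` for odd `χ`.) If the even positive function
`φ` solves `-φ'' + Wφ = 0` and `χ` is odd, `C²`, compactly supported and not identically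
zero, then `∫ χ (-χ'' + W χ) > 0`. -/
theorem quadratic_form_positive_odd
    (W : ℝ → ℝ) (hW : Continuous W)
    (φ : ℝ → ℝ) (hφ : ContDiff ℝ 2 φ) (hφeven : ∀ x, φ (-x) = φ x) (hφpos : ∀ x, 0 < φ x)
    (hground : ∀ x : ℝ, -(deriv (deriv φ) x) + W x * φ x = 0)
    (χ : ℝ → ℝ) (hχ : ContDiff ℝ 2 χ) (hχodd : ∀ x, χ (-x) = -χ x)
    (hχsupp : HasCompactSupport χ) (hχne : ∃ x, χ x ≠ 0) :
    0 < ∫ x : ℝ, χ x * (-(deriv (deriv χ) x) + W x * χ x) := by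
  have hφne : ∀ x, φ x ≠ 0 := fun x => (hφpos x).ne'
  -- the quotient u = χ / φ
  set u : ℝ → ℝ := fun x => χ x / φ x with hu_def
  have hu : ContDiff ℝ 2 u := hχ.div hφ hφne
  have husupp : HasCompactSupport u := by
    apply hχsupp.mono
    intro x hx
    simp only [hu_def, Function.mem_support] at hx ⊢
    intro h
    exact hx (by simp [h])
  -- differentiability bookkeeping
  have two_eq : (2 : WithTop ℕ∞) = 1 + 1 := by norm_num
  have hφ' : Differentiable ℝ φ ∧ ContDiff ℝ 1 (deriv φ) := by
    rw [two_eq, contDiff_succ_iff_deriv] at hφ; exact ⟨hφ.1, hφ.2.2⟩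
  have hu' : Differentiable ℝ u ∧ ContDiff ℝ 1 (deriv u) := by
    rw [two_eq, contDiff_succ_iff_deriv] at hu; exact ⟨hu.1, hu.2.2⟩
  have hχ' : Differentiable ℝ χ ∧ ContDiff ℝ 1 (deriv χ) := by
    rw [two_eq, contDiff_succ_iff_deriv] at hχ; exact ⟨hχ.1, hχ.2.2⟩
  have hφd : Differentiable ℝ φ := hφ'.1
  have hud : Differentiable ℝ u := hu'.1
  have hφ'd : Differentiable ℝ (deriv φ) := hφ'.2.differentiable one_ne_zero
  have hu'd : Differentiable ℝ (deriv u) := hu'.2.differentiable one_ne_zero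
  have hφ''c : Continuous (deriv (deriv φ)) :=
    (contDiff_one_iff_deriv.mp hφ'.2).2
  have hu''c : Continuous (deriv (deriv u)) :=
    (contDiff_one_iff_deriv.mp hu'.2).2
  -- χ = φ * u
  have hχeq : χ = fun x => φ x * u x := by
    funext x
    simp only [hu_def]
    rw [mul_comm, div_mul_cancel₀ _ (hφne x)]
  -- first derivative of χ
  have hχd1 : deriv χ = fun x => deriv φ x * u x + φ x * deriv u x := by
    funext x
    rw [hχeq]
    exact deriv_mul (hφd x) (hud x)
  -- second derivative of χ
  have hχd2 : ∀ x, deriv (deriv χ) x =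
      deriv (deriv φ) x * u x + deriv φ x * deriv u x +
      (deriv φ x * deriv u x + φ x * deriv (deriv u) x) := by
    intro x
    rw [hχd1]
    rw [deriv_fun_add (f := fun y => deriv φ y * u y) (g := fun y => φ y * deriv u y) ((hφ'd x).mul (hud x)) ((hφd x).mul (hu'd x)),
      deriv_fun_mul (hφ'd x) (hud x), deriv_fun_mul (hφd x) (hu'd x)]
  -- the boundary-term function F and the positive density P
  set F : ℝ → ℝ := fun x => φ x * φ x * (u x * deriv u x) with hF_def
  set P : ℝ → ℝ := fun x => (φ x * deriv u x) ^ 2 with hP_def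
  have hFd : ∀ x, HasDerivAt F
      ((deriv φ x * φ x + φ x * deriv φ x) * (u x * deriv u x) +
        φ x * φ x * (deriv u x * deriv u x + u x * deriv (deriv u) x)) x := by
    intro x
    exact (((hφd x).hasDerivAt.mul (hφd x).hasDerivAt).mul
      ((hud x).hasDerivAt.mul (hu'd x).hasDerivAt))
  have hFderiv : ∀ x, deriv F x =
      (deriv φ x * φ x + φ x * deriv φ x) * (u x * deriv u x) +
        φ x * φ x * (deriv u x * deriv u x + u x * deriv (deriv u) x) :=
    fun x => (hFd x).deriv
  -- the key pointwise identity
  have key : ∀ x, χ x * (-(deriv (deriv χ) x) + W x * χ x) = P x - deriv F x := by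
    intro x
    have hg : deriv (deriv φ) x = W x * φ x := by linarith [hground x]
    rw [hFderiv x, hχd2 x, hP_def]
    have hx : χ x = φ x * u x := by rw [hχeq]
    rw [hx, hg]
    ring
  -- continuity and support facts
  have hu'supp : HasCompactSupport (deriv u) := husupp.deriv
  have hFsupp : HasCompactSupport F := by
    apply husupp.mono
    intro x hx
    simp only [hF_def, Function.mem_support] at hx ⊢
    intro h
    exact hx (by simp [h])
  have hF'supp : HasCompactSupport (deriv F) := hFsupp.deriv
  have hu'c : Continuous (deriv u) := hu'd.continuous
  have hF'c : Continuous (deriv F) := by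
    have : deriv F = fun x =>
        (deriv φ x * φ x + φ x * deriv φ x) * (u x * deriv u x) +
          φ x * φ x * (deriv u x * deriv u x + u x * deriv (deriv u) x) :=
      funext hFderiv
    rw [this]
    have := hφd.continuous; have := hud.continuous; have := hφ'd.continuous
    fun_prop
  have hPc : Continuous P := by
    simp only [hP_def]
    fun_prop
  have hPsupp : HasCompactSupport P := by
    apply hu'supp.mono
    intro x hx
    simp only [hP_def, Function.mem_support] at hx ⊢
    intro h
    exact hx (by simp [h])
  have hPint : Integrable P := hPc.integrable_of_hasCompactSupport hPsupp
  have hF'int : Integrable (deriv F) := hF'c.integrable_of_hasCompactSupport hF'supp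
  -- the integral of deriv F vanishes
  have hF'zero : ∫ x, deriv F x = 0 := by
    have hbot : Tendsto F atBot (nhds 0) := by
      refine (hFsupp.is_zero_at_infty).mono_left ?_
      rw [cocompact_eq_atBot_atTop]
      exact le_sup_left
    have htop : Tendsto F atTop (nhds 0) := by
      refine (hFsupp.is_zero_at_infty).mono_left ?_
      rw [cocompact_eq_atBot_atTop]
      exact le_sup_right
    have := integral_of_hasDerivAt_of_tendsto (f := F) (f' := deriv F)
      (fun x => (hFderiv x) ▸ hFd x)
      hF'int hbot htop
    simpa using this
  -- deriv u is not identically zero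
  have hu'ne : ∃ x₀, deriv u x₀ ≠ 0 := by
    by_contra h
    push_neg at h
    have hconst : ∀ x y, u x = u y := is_const_of_deriv_eq_zero hud h
    have hχ0 : χ 0 = 0 := by
      have := hχodd 0
      simp at this
      linarith
    have hu0 : u 0 = 0 := by simp [hu_def, hχ0]
    obtain ⟨x, hx⟩ := hχne
    apply hx
    have : u x = 0 := (hconst x 0).trans hu0
    rw [hχeq]
    simp [this]
  obtain ⟨x₀, hx₀⟩ := hu'ne
  -- P has a point of positivity
  have hPx₀ : P x₀ ≠ 0 := by
    simp only [hP_def]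
    exact pow_ne_zero _ (mul_ne_zero (hφne x₀) hx₀)
  have hPnonneg : 0 ≤ P := fun x => by simp only [hP_def]; positivity
  have hPpos : 0 < ∫ x, P x :=
    hPc.integral_pos_of_hasCompactSupport_nonneg_nonzero hPsupp hPnonneg hPx₀
  calc 0 < ∫ x, P x := hPpos
    _ = (∫ x, P x) - ∫ x, deriv F x := by rw [hF'zero]; ring
    _ = ∫ x, (P x - deriv F x) := (integral_sub hPint hF'int).symm
    _ = ∫ x : ℝ, χ x * (-(deriv (deriv χ) x) + W x * χ x) := by
        exact integral_congr_ae (Eventually.of_forall fun x => (key x).symm)
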